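/- Let H be a complex Hilbert space and let e, f : H → H be idempotent bounded linear operators of finite rank with dim(im e) = dim(im f) (so e and f are D-related in the semigroup of finite-rank operators). Then e and f are connected by an E-chain of length at most 3: there exist idempotent finite-rank bounded operators g, h on H such that each of the consecutive pairs (e,g), (g,h), (h,f) is either R-related (for idempotents a, b: ab = b and ba = a) or L-related (ab = a and ba = b). -/

import Mathlib

open Module Submodule

-- step lemma
theorem compl_step {K W : Type*} [Field K] [AddCommGroup W] [Module K W]
    {U S C' : Submodule K W} (h1 : Disjoint U S) (h2 : IsCompl (U ⊔ S) C') :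
    IsCompl U (C' ⊔ S) := by
  constructor
  · rw [disjoint_def]
    intro x hxU hx
    obtain ⟨c, hc, s, hs, rfl⟩ := Submodule.mem_sup.1 hx
    have hcsup : c ∈ U ⊔ S := by
      have : c = (c + s) - s := (add_sub_cancel_right c s).symm
      rw [this]
      exact Submodule.sub_mem _ (le_sup_left (a := U) hxU) (le_sup_right (b := S) hs)
    have hc0 : c = 0 := (disjoint_def.1 h2.disjoint) c hcsup hc
    subst hc0
    rw [zero_add] at hxU ⊢
    exact (disjoint_def.1 h1) s hxU hs
  · rw [codisjoint_iff, sup_comm C' S, ← sup_assoc]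
    exact codisjoint_iff.1 h2.codisjoint

theorem two_proper_not_cover {K W : Type*} [Field K] [AddCommGroup W] [Module K W]
    {U V : Submodule K W} (hU : U ≠ ⊤) (hV : V ≠ ⊤) : ∃ w, w ∉ U ∧ w ∉ V := by
  have hV' : ¬ (⊤ : Submodule K W) ≤ V := fun h => hV (top_le_iff.1 h)
  have hU' : ¬ (⊤ : Submodule K W) ≤ U := fun h => hU (top_le_iff.1 h)
  by_cases hUV : U ≤ V
  · obtain ⟨w, -, hw⟩ := SetLike.not_le_iff_exists.1 hV'
    exact ⟨w, fun h => hw (hUV h), hw⟩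
  by_cases hVU : V ≤ U
  · obtain ⟨w, -, hw⟩ := SetLike.not_le_iff_exists.1 hU'
    exact ⟨w, hw, fun h => hw (hVU h)⟩
  obtain ⟨u, huU, huV⟩ := SetLike.not_le_iff_exists.1 hUV
  obtain ⟨v, hvV, hvU⟩ := SetLike.not_le_iff_exists.1 hVU
  refine ⟨u + v, fun h => hvU ?_, fun h => huV ?_⟩
  · have : v = (u + v) - u := (add_sub_cancel_left u v).symm
    rw [this]; exact Submodule.sub_mem _ h huU
  · have : u = (u + v) - v := (add_sub_cancel_right u v).symm
    rw [this]; exact Submodule.sub_mem _ h hvV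

theorem exists_common_compl_aux {K W : Type*} [Field K] [AddCommGroup W] [Module K W]
    [FiniteDimensional K W] :
    ∀ (n : ℕ) (U V : Submodule K W), finrank K W ≤ finrank K U + n →
      finrank K U = finrank K V →
      ∃ C : Submodule K W, IsCompl U C ∧ IsCompl V C := by
  intro n
  induction n with
  | zero =>
    intro U V hn hUV
    have hU : U = ⊤ := Submodule.eq_top_of_finrank_eq (le_antisymm (Submodule.finrank_le U) (by omega))
    have hV : V = ⊤ := Submodule.eq_top_of_finrank_eq (le_antisymm (Submodule.finrank_le V) (by omega))
    exact ⟨⊥, by rw [hU, hV]; exact ⟨isCompl_top_bot, isCompl_top_bot⟩⟩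
  | succ n ih =>
    intro U V hn hUV
    by_cases hU : U = ⊤
    · have hV : V = ⊤ := Submodule.eq_top_of_finrank_eq
        (le_antisymm (Submodule.finrank_le V) (by rw [← hUV, hU, finrank_top]))
      exact ⟨⊥, by rw [hU, hV]; exact ⟨isCompl_top_bot, isCompl_top_bot⟩⟩
    have hVt : V ≠ ⊤ := fun h' => hU (Submodule.eq_top_of_finrank_eq
      (le_antisymm (Submodule.finrank_le U) (by rw [hUV, h', finrank_top])))
    obtain ⟨w, hwU, hwV⟩ := two_proper_not_cover hU hVt
    have hw0 : w ≠ 0 := fun h => hwU (h ▸ U.zero_mem)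
    have hdU : Disjoint U (K ∙ w) := (Submodule.disjoint_span_singleton' hw0).2 hwU
    have hdV : Disjoint V (K ∙ w) := (Submodule.disjoint_span_singleton' hw0).2 hwV
    have hfrU : finrank K ↥(U ⊔ K ∙ w) = finrank K U + 1 := by
      have := Submodule.finrank_sup_add_finrank_inf_eq U (K ∙ w)
      rw [hdU.eq_bot] at this
      simp [finrank_span_singleton hw0] at this
      omega
    have hfrV : finrank K ↥(V ⊔ K ∙ w) = finrank K V + 1 := by
      have := Submodule.finrank_sup_add_finrank_inf_eq V (K ∙ w)
      rw [hdV.eq_bot] at this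
      simp [finrank_span_singleton hw0] at this
      omega
    obtain ⟨C', hC1, hC2⟩ := ih (U ⊔ K ∙ w) (V ⊔ K ∙ w) (by omega) (by omega)
    exact ⟨C' ⊔ K ∙ w, compl_step hdU hC1, compl_step hdV hC2⟩

theorem exists_common_compl {K W : Type*} [Field K] [AddCommGroup W] [Module K W]
    [FiniteDimensional K W] (U V : Submodule K W)
    (h : finrank K U = finrank K V) : ∃ C : Submodule K W, IsCompl U C ∧ IsCompl V C :=
  exists_common_compl_aux (finrank K W) U V (by omega) h


/-- Two idempotent finite-rank bounded operators on a complex Hilbert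
space with ranges of equal (finite) dimension are connected by an E-chain of
length at most 3 of idempotent finite-rank operators. -/
theorem idempotents_echain_length_three {H : Type*}
    [NormedAddCommGroup H] [InnerProductSpace ℂ H] [CompleteSpace H]
    (e f : H →L[ℂ] H)
    (he : e.comp e = e) (hf : f.comp f = f)
    (hre : FiniteDimensional ℂ (LinearMap.range (e : H →ₗ[ℂ] H)))
    (hrf : FiniteDimensional ℂ (LinearMap.range (f : H →ₗ[ℂ] H)))
    (hdim : Module.finrank ℂ (LinearMap.range (e : H →ₗ[ℂ] H)) = Module.finrank ℂ (LinearMap.range (f : H →ₗ[ℂ] H))) :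
    ∃ g h : H →L[ℂ] H,
      g.comp g = g ∧ h.comp h = h ∧
      FiniteDimensional ℂ (LinearMap.range (g : H →ₗ[ℂ] H)) ∧
      FiniteDimensional ℂ (LinearMap.range (h : H →ₗ[ℂ] H)) ∧
      ((e.comp g = g ∧ g.comp e = e) ∨ (e.comp g = e ∧ g.comp e = g)) ∧
      ((g.comp h = h ∧ h.comp g = g) ∨ (g.comp h = g ∧ h.comp g = h)) ∧
      ((h.comp f = f ∧ f.comp h = h) ∨ (h.comp f = h ∧ f.comp h = f)) := by
  classical
  set U : Submodule ℂ H := LinearMap.range (e : H →ₗ[ℂ] H) with hUdef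
  set V : Submodule ℂ H := LinearMap.range (f : H →ₗ[ℂ] H) with hVdef
  have heU : ∀ x ∈ U, e x = x := by
    rintro _ ⟨y, rfl⟩
    exact congrArg (fun m => m y) he
  have hfV : ∀ x ∈ V, f x = x := by
    rintro _ ⟨y, rfl⟩
    exact congrArg (fun m => m y) hf
  set W : Submodule ℂ H := U ⊔ V with hWdef
  have hUW : U ≤ W := le_sup_left
  have hVW : V ≤ W := le_sup_right
  haveI : FiniteDimensional ℂ W := Submodule.finiteDimensional_sup U V
  haveI : CompleteSpace W := FiniteDimensional.complete ℂ W
  set U₀ : Submodule ℂ W := U.comap W.subtype with hU₀def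
  set V₀ : Submodule ℂ W := V.comap W.subtype with hV₀def
  have hU₀ : finrank ℂ U₀ = finrank ℂ U := (Submodule.comapSubtypeEquivOfLe hUW).finrank_eq
  have hV₀ : finrank ℂ V₀ = finrank ℂ V := (Submodule.comapSubtypeEquivOfLe hVW).finrank_eq
  obtain ⟨C, hCU, hCV⟩ := exists_common_compl U₀ V₀ (by rw [hU₀, hV₀, hdim])
  set πU : W →ₗ[ℂ] W := U₀.subtype ∘ₗ (U₀.linearProjOfIsCompl C hCU) with hπUdef
  set πV : W →ₗ[ℂ] W := V₀.subtype ∘ₗ (V₀.linearProjOfIsCompl C hCV) with hπVdef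
  have hπU_mem : ∀ y : W, πU y ∈ U₀ := fun y => (U₀.linearProjOfIsCompl C hCU y).2
  have hπV_mem : ∀ y : W, πV y ∈ V₀ := fun y => (V₀.linearProjOfIsCompl C hCV y).2
  have hπU_id : ∀ y : W, y ∈ U₀ → πU y = y := by
    intro y hy
    have := Submodule.linearProjOfIsCompl_apply_left hCU ⟨y, hy⟩
    simp only [hπUdef, LinearMap.comp_apply, Submodule.subtype_apply]
    exact congrArg Subtype.val this
  have hπV_id : ∀ y : W, y ∈ V₀ → πV y = y := by
    intro y hy
    have := Submodule.linearProjOfIsCompl_apply_left hCV ⟨y, hy⟩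
    simp only [hπVdef, LinearMap.comp_apply, Submodule.subtype_apply]
    exact congrArg Subtype.val this
  have hπU_C : ∀ y : W, y ∈ C → πU y = 0 := by
    intro y hy
    have := Submodule.linearProjOfIsCompl_apply_right hCU ⟨y, hy⟩
    simp only [hπUdef, LinearMap.comp_apply, Submodule.subtype_apply]
    exact congrArg Subtype.val this
  have hπV_C : ∀ y : W, y ∈ C → πV y = 0 := by
    intro y hy
    have := Submodule.linearProjOfIsCompl_apply_right hCV ⟨y, hy⟩
    simp only [hπVdef, LinearMap.comp_apply, Submodule.subtype_apply]
    exact congrArg Subtype.val this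
  have hπUV : ∀ y : W, πU (πV y) = πU y := by
    intro y
    obtain ⟨v, hv, c, hc, hvc⟩ := Submodule.mem_sup.1
      ((codisjoint_iff.1 hCV.codisjoint) ▸ Submodule.mem_top (x := y))
    rw [← hvc, map_add, map_add, hπV_id v hv, hπV_C c hc, map_add, hπU_C c hc]
    simp
  have hπVU : ∀ y : W, πV (πU y) = πV y := by
    intro y
    obtain ⟨u, hu, c, hc, huc⟩ := Submodule.mem_sup.1
      ((codisjoint_iff.1 hCU.codisjoint) ▸ Submodule.mem_top (x := y))
    rw [← huc, map_add, map_add, hπU_id u hu, hπU_C c hc, map_add, hπV_C c hc]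
    simp
  set P : H →L[ℂ] W := orthogonalProjection W with hPdef
  have hP : ∀ y : W, P (y : H) = y := fun y => orthogonalProjection_mem_subspace_eq_self y
  set g : H →L[ℂ] H := W.subtypeL.comp ((LinearMap.toContinuousLinearMap πU).comp P) with hgdef
  set h : H →L[ℂ] H := W.subtypeL.comp ((LinearMap.toContinuousLinearMap πV).comp P) with hhdef
  have hg_apply : ∀ x : H, g x = (πU (P x) : H) := fun x => rfl
  have hh_apply : ∀ x : H, h x = (πV (P x) : H) := fun x => rfl
  have hgU : ∀ x : H, g x ∈ U := fun x => hπU_mem (P x)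
  have hhV : ∀ x : H, h x ∈ V := fun x => hπV_mem (P x)
  -- g is the identity on W-elements of U
  have hg_id : ∀ x : H, x ∈ U → g x = x := by
    intro x hx
    have hxW : x ∈ W := hUW hx
    rw [hg_apply, show x = ((⟨x, hxW⟩ : W) : H) from rfl, hP, hπU_id ⟨x, hxW⟩ hx]
  have hh_id : ∀ x : H, x ∈ V → h x = x := by
    intro x hx
    have hxW : x ∈ W := hVW hx
    rw [hh_apply, show x = ((⟨x, hxW⟩ : W) : H) from rfl, hP, hπV_id ⟨x, hxW⟩ hx]
  have hgg : g.comp g = g := by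
    ext x
    simp only [ContinuousLinearMap.comp_apply]
    exact hg_id (g x) (hgU x)
  have hhh : h.comp h = h := by
    ext x
    simp only [ContinuousLinearMap.comp_apply]
    exact hh_id (h x) (hhV x)
  have hrg : FiniteDimensional ℂ (LinearMap.range (g : H →ₗ[ℂ] H)) := by
    apply Submodule.finiteDimensional_of_le (S₂ := U)
    rintro _ ⟨y, rfl⟩
    exact hgU y
  have hrh : FiniteDimensional ℂ (LinearMap.range (h : H →ₗ[ℂ] H)) := by
    apply Submodule.finiteDimensional_of_le (S₂ := V)
    rintro _ ⟨y, rfl⟩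
    exact hhV y
  refine ⟨g, h, hgg, hhh, hrg, hrh, Or.inl ⟨?_, ?_⟩, Or.inr ⟨?_, ?_⟩, Or.inl ⟨?_, ?_⟩⟩
  · ext x
    exact heU (g x) (hgU x)
  · ext x
    exact hg_id (e x) ⟨x, rfl⟩
  · -- g.comp h = g
    ext x
    simp only [ContinuousLinearMap.comp_apply]
    rw [hg_apply, hh_apply, hg_apply, hP, hπUV]
  · ext x
    simp only [ContinuousLinearMap.comp_apply]
    rw [hh_apply, hg_apply, hh_apply, hP, hπVU]
  · ext x
    exact hh_id (f x) ⟨x, rfl⟩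
  · ext x
    exact hfV (h x) (hhV x)
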